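/- Suppose each φ_i : R^d → R is convex and L-smooth (i.e. ∇φ_i is L-Lipschitz), P(w) = (1/n)∑_{i=1}^n φ_i(w) + (λ/2)||w||^2, and w* is a minimizer of P. Then for every w, (1/n)∑_{i=1}^n ||∇φ_i(w) − ∇φ_i(w*)||^2 ≤ 2L (P(w) − P(w*) − (λ/2)||w − w*||^2). -/

import Mathlib

open Set InnerProductSpace

noncomputable section

variable {E : Type*} [NormedAddCommGroup E] [InnerProductSpace ℝ E] [CompleteSpace E]

local notation "⟪" x ", " y "⟫" => @inner ℝ _ _ x y

lemma my_inner_gradient {f : E → ℝ} (x v : E) :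
    ⟪gradient f x, v⟫ = fderiv ℝ f x v := by
  rw [gradient, toDual_symm_apply]

lemma my_line_hasDerivAt {f : E → ℝ} (hf : Differentiable ℝ f) (x v : E) (t : ℝ) :
    HasDerivAt (fun s : ℝ => f (x + s • v)) ⟪gradient f (x + t • v), v⟫ t := by
  have h1 : HasDerivAt (fun s : ℝ => x + s • v) v t := by
    simpa using ((hasDerivAt_id t).smul_const v).const_add x
  have h2 := (hf (x + t • v)).hasFDerivAt.comp_hasDerivAt t h1
  rw [my_inner_gradient]
  exact h2

lemma my_grad_cont {f : E → ℝ} {L : ℝ} (hL : 0 ≤ L)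
    (hLip : ∀ a b, ‖gradient f a - gradient f b‖ ≤ L * ‖a - b‖) :
    Continuous (gradient f) := by
  have : LipschitzWith ⟨L, hL⟩ (gradient f) := by
    apply LipschitzWith.of_dist_le_mul
    intro a b
    rw [dist_eq_norm, dist_eq_norm]; exact hLip a b
  exact this.continuous

lemma my_descent {f : E → ℝ} {L : ℝ} (hL : 0 ≤ L) (hf : Differentiable ℝ f)
    (hLip : ∀ a b, ‖gradient f a - gradient f b‖ ≤ L * ‖a - b‖) (x y : E) :
    f y ≤ f x + ⟪gradient f x, y - x⟫ + L / 2 * ‖y - x‖ ^ 2 := by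
  set v := y - x with hv
  have hcont : Continuous fun t : ℝ => ⟪gradient f (x + t • v), v⟫ := by
    apply Continuous.inner
    · exact (my_grad_cont hL hLip).comp (by continuity)
    · exact continuous_const
  have hftc : (∫ t in (0:ℝ)..1, ⟪gradient f (x + t • v), v⟫) =
      (fun s : ℝ => f (x + s • v)) 1 - (fun s : ℝ => f (x + s • v)) 0 :=
    intervalIntegral.integral_eq_sub_of_hasDerivAt
      (fun t _ => my_line_hasDerivAt hf x v t) (hcont.intervalIntegrable 0 1)
  simp only at hftc
  have hxy : x + (1:ℝ) • v = y := by simp [hv]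
  have hxx : x + (0:ℝ) • v = x := by simp
  rw [hxy, hxx] at hftc
  have hmono : (∫ t in (0:ℝ)..1, ⟪gradient f (x + t • v), v⟫)
      ≤ ∫ t in (0:ℝ)..1, (⟪gradient f x, v⟫ + L * t * ‖v‖ ^ 2) := by
    apply intervalIntegral.integral_mono_on (by norm_num)
    · exact hcont.intervalIntegrable 0 1
    · exact Continuous.intervalIntegrable (by continuity) 0 1
    · intro t ht
      have h1 : ⟪gradient f (x + t • v) - gradient f x, v⟫
          ≤ ‖gradient f (x + t • v) - gradient f x‖ * ‖v‖ := real_inner_le_norm _ _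
      have h2 : ‖gradient f (x + t • v) - gradient f x‖ ≤ L * (t * ‖v‖) := by
        have := hLip (x + t • v) x
        simpa [norm_smul, abs_of_nonneg ht.1] using this
      have h3 : ⟪gradient f (x + t • v) - gradient f x, v⟫ ≤ L * t * ‖v‖ ^ 2 := by
        calc ⟪gradient f (x + t • v) - gradient f x, v⟫
            ≤ ‖gradient f (x + t • v) - gradient f x‖ * ‖v‖ := h1
          _ ≤ (L * (t * ‖v‖)) * ‖v‖ := by
              apply mul_le_mul_of_nonneg_right h2 (norm_nonneg _)
          _ = L * t * ‖v‖ ^ 2 := by ring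
      rw [inner_sub_left] at h3
      linarith
  have hval : (∫ t in (0:ℝ)..1, (⟪gradient f x, v⟫ + L * t * ‖v‖ ^ 2))
      = ⟪gradient f x, v⟫ + L / 2 * ‖v‖ ^ 2 := by
    rw [intervalIntegral.integral_add (Continuous.intervalIntegrable continuous_const 0 1)
      (Continuous.intervalIntegrable (by continuity) 0 1)]
    have h5 : (∫ t in (0:ℝ)..1, L * t * ‖v‖ ^ 2) = ∫ t in (0:ℝ)..1, (L * ‖v‖ ^ 2) * t := by
      congr 1; funext t; ring
    rw [h5, intervalIntegral.integral_const_mul, integral_id, intervalIntegral.integral_const]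
    simp
    ring
  rw [hftc] at hmono
  rw [hval] at hmono
  linarith

lemma my_first_order {f : E → ℝ} (hconv : ConvexOn ℝ Set.univ f) (hf : Differentiable ℝ f)
    (x z : E) : f x + ⟪gradient f x, z - x⟫ ≤ f z := by
  set v := z - x with hv
  have hd : HasDerivAt (fun s : ℝ => f (x + s • v)) ⟪gradient f x, v⟫ 0 := by
    have := my_line_hasDerivAt hf x v 0
    simpa using this
  have hslope : Filter.Tendsto (slope (fun s : ℝ => f (x + s • v)) 0)
      (nhdsWithin 0 (Set.Ioi 0)) (nhds ⟪gradient f x, v⟫) := by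
    have h1 := hasDerivAt_iff_tendsto_slope.mp hd
    exact h1.mono_left (nhdsWithin_mono 0 (fun t ht => ne_of_gt ht))
  have hbound : ∀ᶠ t in nhdsWithin (0:ℝ) (Set.Ioi 0),
      slope (fun s : ℝ => f (x + s • v)) 0 t ≤ f z - f x := by
    filter_upwards [Ioc_mem_nhdsGT_of_mem (Set.left_mem_Ico.mpr one_pos)] with t ht
    have ht0 : 0 < t := ht.1
    have ht1 : t ≤ 1 := ht.2
    have hcvx := hconv.2 (Set.mem_univ x) (Set.mem_univ z)
      (by linarith : (0:ℝ) ≤ 1 - t) ht0.le (by ring)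
    have heq : (1 - t) • x + t • z = x + t • v := by
      simp [hv, smul_sub, sub_smul]
      abel
    rw [heq] at hcvx
    simp only [smul_eq_mul] at hcvx
    rw [slope_def_field]
    simp only [sub_zero, smul_zero, add_zero, zero_smul]
    rw [div_le_iff₀ ht0]
    calc f (x + t • v) - f x ≤ ((1-t) * f x + t * f z) - f x := by linarith
      _ = (f z - f x) * t := by ring
  have := le_of_tendsto hslope hbound
  linarith

lemma my_cocoercive {f : E → ℝ} {L : ℝ} (hL : 0 < L) (hconv : ConvexOn ℝ Set.univ f)
    (hf : Differentiable ℝ f)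
    (hLip : ∀ a b, ‖gradient f a - gradient f b‖ ≤ L * ‖a - b‖) (x y : E) :
    ‖gradient f x - gradient f y‖ ^ 2 ≤ 2 * L * (f x - f y - ⟪gradient f y, x - y⟫) := by
  set g := gradient f x - gradient f y with hg
  set z := x - L⁻¹ • g with hz
  have h1 := my_descent hL.le hf hLip x z
  have h2 := my_first_order hconv hf y z
  have hzx : z - x = -(L⁻¹ • g) := by rw [hz]; abel
  have hzy : z - y = (x - y) - L⁻¹ • g := by rw [hz]; abel
  have e1 : ⟪gradient f x, z - x⟫ = -(L⁻¹ * ⟪gradient f x, g⟫) := by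
    rw [hzx, inner_neg_right, real_inner_smul_right]
  have e2 : ‖z - x‖ ^ 2 = L⁻¹ ^ 2 * ‖g‖ ^ 2 := by
    rw [hzx, norm_neg, norm_smul]
    rw [Real.norm_eq_abs, abs_of_nonneg (by positivity : (0:ℝ) ≤ L⁻¹)]
    ring
  have e3 : ⟪gradient f y, z - y⟫ = ⟪gradient f y, x - y⟫ - L⁻¹ * ⟪gradient f y, g⟫ := by
    rw [hzy, inner_sub_right, real_inner_smul_right]
  have e4 : ‖g‖ ^ 2 = ⟪gradient f x, g⟫ - ⟪gradient f y, g⟫ := by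
    rw [← real_inner_self_eq_norm_sq, hg, inner_sub_left]
  rw [e1, e2] at h1
  rw [e3] at h2
  have hL' : L ≠ 0 := hL.ne'
  have key : f y + ⟪gradient f y, x - y⟫ - L⁻¹ * ⟪gradient f y, g⟫
      ≤ f x - L⁻¹ * ⟪gradient f x, g⟫ + L / 2 * (L⁻¹ ^ 2 * ‖g‖ ^ 2) := by linarith
  have e5 : L / 2 * (L⁻¹ ^ 2 * ‖g‖ ^ 2) = L⁻¹ / 2 * ‖g‖ ^ 2 := by
    field_simp
  have e6 : L⁻¹ * ⟪gradient f x, g⟫ - L⁻¹ * ⟪gradient f y, g⟫ = L⁻¹ * ‖g‖ ^ 2 := by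
    rw [e4]; ring
  have key3 : L⁻¹ / 2 * ‖g‖ ^ 2 ≤ f x - f y - ⟪gradient f y, x - y⟫ := by linarith
  have key4 := mul_le_mul_of_nonneg_left key3 (by positivity : (0:ℝ) ≤ 2 * L)
  have e7 : 2 * L * (L⁻¹ / 2 * ‖g‖ ^ 2) = ‖g‖ ^ 2 := by
    field_simp
  linarith

end

local notation "⟪" x ", " y "⟫" => @inner ℝ _ _ x y

theorem stmt_2 {d n : ℕ} (hn : 0 < n) (φ : Fin n → EuclideanSpace ℝ (Fin d) → ℝ)
    (L lam : ℝ) (hlam : 0 < lam)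
    (hconv : ∀ i, ConvexOn ℝ Set.univ (φ i))
    (hdiff : ∀ i, Differentiable ℝ (φ i))
    (hLip : ∀ i, ∀ x y, ‖gradient (φ i) x - gradient (φ i) y‖ ≤ L * ‖x - y‖)
    (P : EuclideanSpace ℝ (Fin d) → ℝ)
    (hP : ∀ w, P w = (1 / (n : ℝ)) * ∑ i, φ i w + lam / 2 * ‖w‖ ^ 2)
    (wstar : EuclideanSpace ℝ (Fin d)) (hmin : ∀ w, P wstar ≤ P w)
    (w : EuclideanSpace ℝ (Fin d)) :
    (1 / (n : ℝ)) * ∑ i, ‖gradient (φ i) w - gradient (φ i) wstar‖ ^ 2 ≤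
      2 * L * (P w - P wstar - lam / 2 * ‖w - wstar‖ ^ 2) := by
  classical
  rcases le_or_gt L 0 with hL | hL
  · -- degenerate case
    have hgradeq : ∀ i, gradient (φ i) w = gradient (φ i) wstar := by
      intro i
      have h1 := hLip i w wstar
      have h2 : L * ‖w - wstar‖ ≤ 0 :=
        mul_nonpos_of_nonpos_of_nonneg hL (norm_nonneg _)
      have h3 : ‖gradient (φ i) w - gradient (φ i) wstar‖ = 0 :=
        le_antisymm (h1.trans h2) (norm_nonneg _)
      rwa [norm_eq_zero, sub_eq_zero] at h3
    have hLHS : (1 / (n : ℝ)) * ∑ i, ‖gradient (φ i) w - gradient (φ i) wstar‖ ^ 2 = 0 := by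
      rw [Finset.sum_eq_zero, mul_zero]
      intro i _
      rw [hgradeq i, sub_self, norm_zero]
      norm_num
    rw [hLHS]
    by_cases hw : w = wstar
    · subst hw
      simp
    · have hne : ‖w - wstar‖ > 0 := by
        rw [gt_iff_lt, norm_pos_iff, sub_ne_zero]; exact hw
      have hL0 : L = 0 := by
        have i0 : Fin n := ⟨0, hn⟩
        have h1 := hLip i0 w wstar
        rw [hgradeq i0, sub_self, norm_zero] at h1
        nlinarith
      rw [hL0]
      norm_num
  · -- main case: L > 0
    set a : Fin n → EuclideanSpace ℝ (Fin d) := fun i => gradient (φ i) wstar with ha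
    -- gradient of P at wstar is zero
    have hsum : HasFDerivAt (fun z : EuclideanSpace ℝ (Fin d) => ∑ i, φ i z)
        (∑ i, InnerProductSpace.toDual ℝ (EuclideanSpace ℝ (Fin d)) (a i)) wstar :=
      HasFDerivAt.fun_sum fun i _ => ((hdiff i) wstar).hasGradientAt.hasFDerivAt
    have h1 := hsum.const_mul (1 / (n : ℝ))
    have hinner : HasFDerivAt (fun z : EuclideanSpace ℝ (Fin d) => ⟪z, z⟫)
        ((fderivInnerCLM ℝ (wstar, wstar)).comp
          ((ContinuousLinearMap.id ℝ (EuclideanSpace ℝ (Fin d))).prod (ContinuousLinearMap.id ℝ (EuclideanSpace ℝ (Fin d))))) wstar :=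
      (hasFDerivAt_id wstar).inner ℝ (hasFDerivAt_id wstar)
    have h2 := hinner.const_mul (lam / 2)
    have hPfun : P = fun z : EuclideanSpace ℝ (Fin d) => (1 / (n : ℝ)) * ∑ i, φ i z + lam / 2 * ⟪z, z⟫ := by
      funext z
      rw [hP z, real_inner_self_eq_norm_sq]
    have hDP : HasFDerivAt P
        ((1 / (n : ℝ)) • (∑ i, InnerProductSpace.toDual ℝ (EuclideanSpace ℝ (Fin d)) (a i)) +
          (lam / 2) • ((fderivInnerCLM ℝ (wstar, wstar)).comp
            ((ContinuousLinearMap.id ℝ (EuclideanSpace ℝ (Fin d))).prod (ContinuousLinearMap.id ℝ (EuclideanSpace ℝ (Fin d)))))) wstar := by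
      rw [hPfun]
      exact h1.add h2
    have hlocmin : IsLocalMin P wstar := Filter.Eventually.of_forall hmin
    have hD0 := hlocmin.hasFDerivAt_eq_zero hDP
    have key : ∀ u : EuclideanSpace ℝ (Fin d), (1 / (n : ℝ)) * ∑ i, ⟪a i, u⟫ + lam * ⟪wstar, u⟫ = 0 := by
      intro u
      have h := congrArg (fun T : EuclideanSpace ℝ (Fin d) →L[ℝ] ℝ => T u) hD0
      simp only [ContinuousLinearMap.add_apply, ContinuousLinearMap.smul_apply,
        ContinuousLinearMap.coe_sum', Finset.sum_apply, ContinuousLinearMap.comp_apply,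
        ContinuousLinearMap.prod_apply, ContinuousLinearMap.coe_id', id_eq,
        fderivInnerCLM_apply, ContinuousLinearMap.zero_apply, smul_eq_mul,
        InnerProductSpace.toDual_apply_apply] at h
      rw [show (⟪u, wstar⟫:ℝ) = ⟪wstar, u⟫ from real_inner_comm wstar u] at h
      linarith
    -- cocoercivity for each i
    have hco : ∀ i, ‖gradient (φ i) w - a i‖ ^ 2 ≤
        2 * L * (φ i w - φ i wstar - ⟪a i, w - wstar⟫) := fun i =>
      my_cocoercive hL (hconv i) (hdiff i) (hLip i) w wstar
    set S1 := ∑ i, φ i w with hS1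
    set S2 := ∑ i, φ i wstar with hS2
    set T := ∑ i, ⟪a i, w - wstar⟫ with hT
    set Q := ∑ i, ‖gradient (φ i) w - a i‖ ^ 2 with hQ
    have hsumle : Q ≤ 2 * L * (S1 - S2 - T) := by
      calc Q ≤ ∑ i, 2 * L * (φ i w - φ i wstar - ⟪a i, w - wstar⟫) :=
            Finset.sum_le_sum fun i _ => hco i
        _ = 2 * L * (S1 - S2 - T) := by
            rw [← Finset.mul_sum, hS1, hS2, hT, ← Finset.sum_sub_distrib,
              ← Finset.sum_sub_distrib]
    have hkey := key (w - wstar)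
    have hws : ⟪wstar, w - wstar⟫ = ⟪w, wstar⟫ - ‖wstar‖ ^ 2 := by
      rw [inner_sub_right, real_inner_comm wstar w, real_inner_self_eq_norm_sq]
    rw [hws] at hkey
    have hnorm : ‖w - wstar‖ ^ 2 = ‖w‖ ^ 2 - 2 * ⟪w, wstar⟫ + ‖wstar‖ ^ 2 := by
      rw [← real_inner_self_eq_norm_sq, ← real_inner_self_eq_norm_sq,
        ← real_inner_self_eq_norm_sq, inner_sub_sub_self]
      rw [real_inner_comm wstar w]
      ring
    have hn' : (0:ℝ) < n := Nat.cast_pos.mpr hn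
    have hstep : (1 / (n : ℝ)) * Q ≤ 2 * L * ((1/(n:ℝ)) * S1 - (1/(n:ℝ)) * S2 - (1/(n:ℝ)) * T) := by
      have h3 := mul_le_mul_of_nonneg_left hsumle (by positivity : (0:ℝ) ≤ 1 / (n:ℝ))
      have heq : (1/(n:ℝ)) * (2 * L * (S1 - S2 - T)) =
          2 * L * ((1/(n:ℝ)) * S1 - (1/(n:ℝ)) * S2 - (1/(n:ℝ)) * T) := by ring
      linarith
    rw [hP w, hP wstar]
    have hrhseq : 2 * L * (((1/(n:ℝ)) * S1 + lam / 2 * ‖w‖ ^ 2) -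
        ((1/(n:ℝ)) * S2 + lam / 2 * ‖wstar‖ ^ 2) - lam / 2 * ‖w - wstar‖ ^ 2) =
        2 * L * ((1/(n:ℝ)) * S1 - (1/(n:ℝ)) * S2 - (1/(n:ℝ)) * T) := by
      rw [hnorm]
      linear_combination 2 * L * hkey
    rw [hrhseq]
    exact hstep
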